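/- (Comparative statics in subregime B2.) Fix θ ∈ (0,1) and F_l > 0. The threshold σ̂^t_l(p^d) = p^d·θ/((1−θ)(F_l − p^d)) is strictly increasing in p^d on (0, (1−θ)F_l], and for fixed p^d ∈ (0, F_l) the map θ ↦ p^d·θ/((1−θ)(F_l − p^d)) is strictly increasing on (0,1). Consequently, if Δc^θ : [0,1] → ℝ is strictly decreasing, then along the subregime-B2 equilibria the misbehavior rate σ^t*_l = σ̂^t_l(p^d) is strictly increasing in p^d and the inspection rate σ^d*_H = (Δc^θ(σ̂^t_l(p^d)) − p^t_l)/F_l is strictly decreasing in p^d on (0, (1−θ)F_l]. -/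
import Mathlib


open Set

/-- Comparative statics in subregime B2: the threshold `σ̂(pd)` is strictly increasing
in `pd` and in `θ`; hence along subregime-B2 equilibria the misbehavior rate is strictly
increasing and the inspection rate strictly decreasing in `pd`. -/
theorem comparative_statics_B2 (θ Fl ptl : ℝ)
    (hθ : θ ∈ Ioo (0:ℝ) 1) (hFl : 0 < Fl) (hptl : 0 < ptl) (Δc : ℝ → ℝ) :
    StrictMonoOn (fun pd => pd * θ / ((1 - θ) * (Fl - pd))) (Ioc 0 ((1 - θ) * Fl)) ∧
    (∀ pd : ℝ, 0 < pd → pd < Fl →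
      StrictMonoOn (fun t => pd * t / ((1 - t) * (Fl - pd))) (Ioo (0:ℝ) 1)) ∧
    (StrictAntiOn Δc (Icc 0 1) →
      StrictMonoOn (fun pd => pd * θ / ((1 - θ) * (Fl - pd))) (Ioc 0 ((1 - θ) * Fl)) ∧
      StrictAntiOn (fun pd => (Δc (pd * θ / ((1 - θ) * (Fl - pd))) - ptl) / Fl)
        (Ioc 0 ((1 - θ) * Fl))) := by
  obtain ⟨hθ0, hθ1⟩ := hθ
  have h1θ : 0 < 1 - θ := by linarith
  have hmono : StrictMonoOn (fun pd => pd * θ / ((1 - θ) * (Fl - pd)))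
      (Ioc 0 ((1 - θ) * Fl)) := by
    intro a ha b hb hab
    have hFa : 0 < Fl - a := by nlinarith [ha.2]
    have hFb : 0 < Fl - b := by nlinarith [hb.2]
    have hda : 0 < (1 - θ) * (Fl - a) := by positivity
    have hdb : 0 < (1 - θ) * (Fl - b) := by positivity
    simp only
    rw [div_lt_div_iff₀ hda hdb]
    nlinarith [mul_pos (mul_pos hθ0 h1θ) (mul_pos hFl (sub_pos.mpr hab))]
  have hmem : ∀ x ∈ Ioc (0:ℝ) ((1 - θ) * Fl),
      x * θ / ((1 - θ) * (Fl - x)) ∈ Icc (0:ℝ) 1 := by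
    intro x hx
    have hFx : 0 < Fl - x := by nlinarith [hx.2, hx.1]
    have hd : 0 < (1 - θ) * (Fl - x) := by positivity
    constructor
    · exact div_nonneg (by nlinarith [hx.1]) hd.le
    · rw [div_le_one hd]; nlinarith [hx.2]
  refine ⟨hmono, ?_, fun hΔ => ⟨hmono, ?_⟩⟩
  · intro pd hpd0 hpdF s hs t ht hst
    have hFp : 0 < Fl - pd := by linarith
    have h1s : 0 < 1 - s := by linarith [hs.2]
    have h1t : 0 < 1 - t := by linarith [ht.2]
    have hds : 0 < (1 - s) * (Fl - pd) := by positivity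
    have hdt : 0 < (1 - t) * (Fl - pd) := by positivity
    simp only
    rw [div_lt_div_iff₀ hds hdt]
    nlinarith [mul_pos (mul_pos hpd0 hFp) (sub_pos.mpr hst)]
  · intro a ha b hb hab
    have h := hΔ (hmem a ha) (hmem b hb) (hmono ha hb hab)
    simp only
    rw [div_lt_div_iff₀ hFl hFl]
    nlinarith
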